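/- Let G be a nilpotent group and H ≤ G a subgroup of finite index. If a prime p divides [G : H], then there exists g ∈ G with min{ n > 0 : gⁿ ∈ H } = p. -/

import Mathlib

open Subgroup

/-- The set of positive exponents landing in a finite-index subgroup is nonempty. -/
lemma aux_exists_pos_pow_mem {G : Type*} [Group G] (H : Subgroup G) [H.FiniteIndex] (g : G) :
    ∃ n, 0 < n ∧ g ^ n ∈ H := by
  haveI : Finite (G ⧸ H) := H.finite_quotient_of_finiteIndex
  obtain ⟨i, j, hij, h⟩ :=
    Finite.exists_ne_map_eq_of_infinite (fun n : ℕ => (QuotientGroup.mk (g ^ n) : G ⧸ H))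
  wlog hlt : i < j generalizing i j
  · exact this j i hij.symm h.symm (by omega)
  refine ⟨j - i, by omega, ?_⟩
  have hmem : (g ^ i)⁻¹ * g ^ j ∈ H := QuotientGroup.eq.mp h
  have : g ^ (j - i) = (g ^ i)⁻¹ * g ^ j := by
    rw [eq_inv_mul_iff_mul_eq, ← pow_add, Nat.add_sub_cancel' hlt.le]
  rwa [this]

/-- The sInf of the set of positive exponents divides every exponent landing in `H`. -/
lemma aux_pow_mem_iff {G : Type*} [Group G] (H : Subgroup G) (g : G)
    (hne : {n : ℕ | 0 < n ∧ g ^ n ∈ H}.Nonempty) (n : ℕ) :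
    g ^ n ∈ H ↔ sInf {n : ℕ | 0 < n ∧ g ^ n ∈ H} ∣ n := by
  set m := sInf {n : ℕ | 0 < n ∧ g ^ n ∈ H} with hm
  obtain ⟨hmpos, hmH⟩ := Nat.sInf_mem hne
  constructor
  · intro h
    by_contra hnd
    have hr0 : n % m ≠ 0 := fun h0 => hnd (Nat.dvd_of_mod_eq_zero h0)
    have hg : g ^ (n % m) ∈ H := by
      have : g ^ (n % m) = ((g ^ m) ^ (n / m))⁻¹ * g ^ n := by
        rw [eq_inv_mul_iff_mul_eq, ← pow_mul, ← pow_add, Nat.div_add_mod]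
      rw [this]
      exact H.mul_mem (H.inv_mem (H.pow_mem hmH _)) h
    have hmem : n % m ∈ {j : ℕ | 0 < j ∧ g ^ j ∈ H} := ⟨Nat.pos_of_ne_zero hr0, hg⟩
    have hle : m ≤ n % m := Nat.sInf_le hmem
    have hlt : n % m < m := Nat.mod_lt n hmpos
    omega
  · rintro ⟨c, rfl⟩
    rw [pow_mul]
    exact H.pow_mem hmH c

/-- In a nilpotent group, if `p` divides the index of a finite-index subgroup, some element's
minimal period modulo the subgroup is divisible by `p`. -/
lemma aux_dvd_sInf {G : Type*} [Group G] [Group.IsNilpotent G] (p : ℕ) (hp : p.Prime) :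
    ∀ k : ℕ, ∀ H : Subgroup G, H.FiniteIndex → H.index = k → p ∣ k →
      ∃ g : G, p ∣ sInf {n : ℕ | 0 < n ∧ g ^ n ∈ H} := by
  intro k
  induction k using Nat.strong_induction_on with
  | _ k ih =>
    intro H hFI hk hdvd
    haveI := hFI
    have hk0 : k ≠ 0 := by rw [← hk]; exact hFI.index_ne_zero
    have hk1 : k ≠ 1 := by rintro rfl; simpa using hp.one_lt.ne' (Nat.eq_one_of_dvd_one hdvd)
    have hHtop : H ≠ ⊤ := fun h => hk1 (by rw [← hk, h, Subgroup.index_top])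
    have hlt : H < Subgroup.normalizer (H : Set G) :=
      normalizerCondition_of_isNilpotent H (lt_top_iff_ne_top.mpr hHtop)
    set N := Subgroup.normalizer (H : Set G) with hN
    have hle : H ≤ N := hlt.le
    have hmul : H.relIndex N * N.index = H.index := Subgroup.relIndex_mul_index hle
    have hNfin : N.FiniteIndex := ⟨fun h0 => hk0 (by rw [← hk, ← hmul, h0, mul_zero])⟩
    have hrel0 : H.relIndex N ≠ 0 := fun h0 => hk0 (by rw [← hk, ← hmul, h0, zero_mul])
    rcases (hp.dvd_mul.mp (by rw [hmul, hk]; exact hdvd)) with hc | hc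
    · -- p divides the relative index: use Cauchy in N ⧸ H
      haveI : (H.subgroupOf N).Normal := Subgroup.normal_in_normalizer
      haveI : (H.subgroupOf N).FiniteIndex := ⟨hrel0⟩
      haveI : Finite (N ⧸ H.subgroupOf N) := (H.subgroupOf N).finite_quotient_of_finiteIndex
      haveI : Fintype (N ⧸ H.subgroupOf N) := Fintype.ofFinite _
      haveI : Fact p.Prime := ⟨hp⟩
      have hcard : Fintype.card (N ⧸ H.subgroupOf N) = H.relIndex N := by
        rw [← Nat.card_eq_fintype_card]; rfl
      obtain ⟨q, hq⟩ := exists_prime_orderOf_dvd_card p (by rw [hcard]; exact hc)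
      obtain ⟨n, rfl⟩ := QuotientGroup.mk_surjective q
      refine ⟨(n : G), ?_⟩
      have hne := aux_exists_pos_pow_mem H (n : G)
      obtain ⟨hmpos, hmH⟩ := Nat.sInf_mem hne
      set m := sInf {j : ℕ | 0 < j ∧ (n : G) ^ j ∈ H}
      have : (QuotientGroup.mk n : N ⧸ H.subgroupOf N) ^ m = 1 := by
        rw [← QuotientGroup.mk_pow, QuotientGroup.eq_one_iff]
        rw [Subgroup.mem_subgroupOf, SubgroupClass.coe_pow]; exact hmH
      rw [← hq]
      exact orderOf_dvd_of_pow_eq_one this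
    · -- p divides the index of the normalizer: induct
      have hrel1 : H.relIndex N ≠ 1 := fun h1 => hlt.not_ge (Subgroup.relIndex_eq_one.mp h1)
      have hNlt : N.index < k := by
        have : N.index ≠ 0 := hNfin.index_ne_zero
        have h2 : 2 ≤ H.relIndex N := by omega
        calc N.index < H.relIndex N * N.index := by nlinarith [Nat.pos_of_ne_zero this]
        _ = k := by rw [hmul, hk]
      obtain ⟨g, hg⟩ := ih N.index hNlt N hNfin rfl hc
      refine ⟨g, ?_⟩
      have hneH := aux_exists_pos_pow_mem H g
      have hneN : {j : ℕ | 0 < j ∧ g ^ j ∈ N}.Nonempty := by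
        obtain ⟨j, hj, hjH⟩ := hneH; exact ⟨j, hj, hle hjH⟩
      obtain ⟨hmpos, hmH⟩ := Nat.sInf_mem hneH
      have : g ^ sInf {n : ℕ | 0 < n ∧ g ^ n ∈ H} ∈ N := hle hmH
      have hdvdm := (aux_pow_mem_iff N g hneN _).mp this
      exact hg.trans hdvdm

theorem stmt_11 {G : Type*} [Group G] [Group.IsNilpotent G] (H : Subgroup G)
    [H.FiniteIndex] (p : ℕ) (hp : p.Prime) (hdvd : p ∣ H.index) :
    ∃ g : G, sInf {n : ℕ | 0 < n ∧ g ^ n ∈ H} = p := by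
  obtain ⟨g, hg⟩ := aux_dvd_sInf p hp H.index H inferInstance rfl hdvd
  have hne := aux_exists_pos_pow_mem H g
  set m := sInf {n : ℕ | 0 < n ∧ g ^ n ∈ H} with hm
  obtain ⟨hmpos, hmH⟩ := Nat.sInf_mem hne
  obtain ⟨c, hc⟩ := hg
  have hc0 : 0 < c := by
    have h1 : 0 < p * c := by rw [← hc]; exact hmpos
    rcases Nat.eq_zero_or_pos c with rfl | h
    · simp at h1
    · exact h
  refine ⟨g ^ c, ?_⟩
  have key : ∀ n : ℕ, (g ^ c) ^ n ∈ H ↔ p ∣ n := by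
    intro n
    rw [← pow_mul, aux_pow_mem_iff H g hne, ← hm, hc]
    constructor
    · rintro ⟨d, hd⟩
      exact ⟨d, Nat.eq_of_mul_eq_mul_left hc0 (by rw [hd]; ring)⟩
    · rintro ⟨d, rfl⟩
      exact ⟨d, by ring⟩
  have hset : {n : ℕ | 0 < n ∧ (g ^ c) ^ n ∈ H} = {n : ℕ | 0 < n ∧ p ∣ n} := by
    ext n; simp [key n]
  rw [hset]
  have hmem : p ∈ {n : ℕ | 0 < n ∧ p ∣ n} := ⟨hp.pos, dvd_refl p⟩
  refine le_antisymm (Nat.sInf_le hmem) ?_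
  obtain ⟨h1, h2⟩ := Nat.sInf_mem ⟨p, hmem⟩
  exact Nat.le_of_dvd h1 h2
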